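/- Let V₀(x) = [[x⁴, x⁵],[x⁵, x⁶]] and let ℓ > 0. Then det(∫_{x−ℓ/2}^{x+ℓ/2} V₀(y) dy) = ℓ⁴x⁸/12 + (terms of lower degree in x), and tr(∫_{x−ℓ/2}^{x+ℓ/2} V₀(y) dy) = ℓx⁶ + (terms of lower degree in x). Consequently, liminf_{x→±∞} λ(∫_{x−ℓ/2}^{x+ℓ/2} V₀(y) dy)/x² ≥ ℓ³/12. -/

import Mathlib

open scoped ComplexOrder
open MeasureTheory intervalIntegral

/-- The smallest eigenvalue of a Hermitian matrix, as the infimum of the quadratic form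
over unit vectors. -/
noncomputable def minEig {m : ℕ} (A : Matrix (Fin m) (Fin m) ℂ) : ℝ :=
  sInf {r : ℝ | ∃ v : Fin m → ℂ, (∑ i, ‖v i‖ ^ 2) = 1 ∧
    r = (dotProduct (star v) (A.mulVec v)).re}

/-- The entrywise integral `∫_{x−ℓ/2}^{x+ℓ/2} V₀(y) dy` of the matrix potential
`V₀(y) = [[y⁴, y⁵], [y⁵, y⁶]]`. -/
noncomputable def intV0 (ℓ x : ℝ) : Matrix (Fin 2) (Fin 2) ℂ :=
  !![((∫ y in (x - ℓ / 2)..(x + ℓ / 2), y ^ 4 : ℝ) : ℂ),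
     ((∫ y in (x - ℓ / 2)..(x + ℓ / 2), y ^ 5 : ℝ) : ℂ);
     ((∫ y in (x - ℓ / 2)..(x + ℓ / 2), y ^ 5 : ℝ) : ℂ),
     ((∫ y in (x - ℓ / 2)..(x + ℓ / 2), y ^ 6 : ℝ) : ℂ)]

open Polynomial Filter

section EigAux

lemma dot_re (a b c : ℝ) (v : Fin 2 → ℂ) :
    (dotProduct (star v) ((!![(a:ℂ), b; b, c]).mulVec v)).re
     = a*((v 0).re^2+(v 0).im^2) + c*((v 1).re^2+(v 1).im^2)
       + 2*b*((v 0).re*(v 1).re + (v 0).im*(v 1).im) := by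
  simp [dotProduct, Matrix.mulVec, Fin.sum_univ_two,
    Complex.add_re, Complex.mul_re, Complex.ofReal_re, Complex.ofReal_im]
  ring

lemma norm_sq_complex (z : ℂ) : ‖z‖^2 = z.re^2 + z.im^2 := by
  rw [Complex.sq_norm, Complex.normSq_apply]; ring

lemma quad_aux (a b c : ℝ) (v : Fin 2 → ℂ) (hv : (∑ i, ‖v i‖ ^ 2) = 1) :
    a * c - b ^ 2 ≤ (a + c) *
      (dotProduct (star v) ((!![(a:ℂ), b; b, c]).mulVec v)).re := by
  rw [dot_re]
  rw [Fin.sum_univ_two, norm_sq_complex, norm_sq_complex] at hv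
  set p := (v 0).re; set p' := (v 0).im; set q := (v 1).re; set q' := (v 1).im
  have hb : b^2*(p^2+p'^2+(q^2+q'^2)) = b^2 := by rw [hv]; ring
  have hac : (a*c)*(p^2+p'^2+(q^2+q'^2)) = a*c := by rw [hv]; ring
  nlinarith [sq_nonneg (a*p + b*q), sq_nonneg (a*p' + b*q'),
    sq_nonneg (c*q + b*p), sq_nonneg (c*q' + b*p'), hb, hac]

lemma bddBelow_quadSet (a b c : ℝ) (h : 0 < a + c) :
    BddBelow {r : ℝ | ∃ v : Fin 2 → ℂ, (∑ i, ‖v i‖ ^ 2) = 1 ∧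
      r = (dotProduct (star v) ((!![(a:ℂ), b; b, c]).mulVec v)).re} := by
  refine ⟨(a * c - b ^ 2) / (a + c), ?_⟩
  rintro r ⟨v, hv, rfl⟩
  rw [div_le_iff₀ h]
  linarith [quad_aux a b c v hv]

lemma minEig_lower (a b c : ℝ) (h : 0 < a + c) :
    (a * c - b ^ 2) / (a + c) ≤ minEig !![(a:ℂ), b; b, c] := by
  apply le_csInf
  · refine ⟨_, ![1, 0], ?_, rfl⟩
    simp [Fin.sum_univ_two]
  · rintro r ⟨v, hv, rfl⟩
    rw [div_le_iff₀ h]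
    linarith [quad_aux a b c v hv]

lemma minEig_upper (a b c x : ℝ) (hx : x ≠ 0) (h : 0 < a + c) :
    minEig !![(a:ℂ), b; b, c] ≤ (a * x^2 - 2*b*x + c) / (1 + x^2) := by
  have h1 : (0:ℝ) < 1 + x^2 := by positivity
  have hs : Real.sqrt (1 + x^2) > 0 := Real.sqrt_pos.2 h1
  have hss : Real.sqrt (1 + x^2) ^ 2 = 1 + x^2 := Real.sq_sqrt h1.le
  apply csInf_le (bddBelow_quadSet a b c h)
  refine ⟨![(x / Real.sqrt (1 + x^2) : ℝ), (-(1 / Real.sqrt (1 + x^2)) : ℝ)], ?_, ?_⟩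
  · simp only [Fin.sum_univ_two, Matrix.cons_val_zero, Matrix.cons_val_one, Matrix.head_cons,
      norm_sq_complex, Complex.ofReal_re, Complex.ofReal_im]
    field_simp
    nlinarith [hss]
  · rw [dot_re]
    simp only [Matrix.cons_val_zero, Matrix.cons_val_one, Matrix.head_cons,
      Complex.ofReal_re, Complex.ofReal_im]
    field_simp
    ring_nf
    rw [hss]; ring

end EigAux

section IntAux

lemma intA (ℓ x : ℝ) : (∫ y in (x - ℓ / 2)..(x + ℓ / 2), y ^ 4 : ℝ)
    = ℓ*x^4 + (ℓ^3/2)*x^2 + ℓ^5/80 := by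
  rw [integral_pow]; ring

lemma intB (ℓ x : ℝ) : (∫ y in (x - ℓ / 2)..(x + ℓ / 2), y ^ 5 : ℝ)
    = ℓ*x^5 + (5*ℓ^3/6)*x^3 + (ℓ^5/16)*x := by
  rw [integral_pow]; ring

lemma intC (ℓ x : ℝ) : (∫ y in (x - ℓ / 2)..(x + ℓ / 2), y ^ 6 : ℝ)
    = ℓ*x^6 + (5*ℓ^3/4)*x^4 + (3*ℓ^5/16)*x^2 + ℓ^7/448 := by
  rw [integral_pow]; ring

lemma det_re' (A B C : ℝ) : (!![(A:ℂ), B; B, C]).det.re = A*C - B^2 := by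
  rw [Matrix.det_fin_two_of, ← Complex.ofReal_mul, ← Complex.ofReal_mul,
    ← Complex.ofReal_sub, Complex.ofReal_re]; ring

lemma trace_re' (A B C : ℝ) : (!![(A:ℂ), B; B, C]).trace.re = A + C := by
  rw [Matrix.trace_fin_two_of, ← Complex.ofReal_add, Complex.ofReal_re]

lemma intV0_det_re (ℓ x : ℝ) : (intV0 ℓ x).det.re =
    (∫ y in (x - ℓ / 2)..(x + ℓ / 2), y ^ 4 : ℝ) * (∫ y in (x - ℓ / 2)..(x + ℓ / 2), y ^ 6 : ℝ)
    - (∫ y in (x - ℓ / 2)..(x + ℓ / 2), y ^ 5 : ℝ) ^ 2 :=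
  det_re' _ _ _

lemma intV0_trace_re (ℓ x : ℝ) : (intV0 ℓ x).trace.re =
    (∫ y in (x - ℓ / 2)..(x + ℓ / 2), y ^ 4 : ℝ)
    + (∫ y in (x - ℓ / 2)..(x + ℓ / 2), y ^ 6 : ℝ) :=
  trace_re' _ _ _

end IntAux

section PolyAux

noncomputable def polyP (ℓ : ℝ) : Polynomial ℝ :=
  C (ℓ^6/180) * X^6 + C (5*ℓ^8/672) * X^4 + C (-(ℓ^10/2240)) * X^2 + C (ℓ^12/35840)
noncomputable def polyQ (ℓ : ℝ) : Polynomial ℝ :=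
  C (ℓ+5*ℓ^3/4) * X^4 + C (ℓ^3/2+3*ℓ^5/16) * X^2 + C (ℓ^5/80+ℓ^7/448)
noncomputable def polyN (ℓ : ℝ) : Polynomial ℝ := C (ℓ^4/12) * X^8 + polyP ℓ
noncomputable def polyD (ℓ : ℝ) : Polynomial ℝ := C ℓ * X^8 + polyQ ℓ * X^2
noncomputable def polyNu (ℓ : ℝ) : Polynomial ℝ :=
  C (ℓ^3/12) * X^4 + (C (3*ℓ^5/40) * X^2 + C (ℓ^7/448))
noncomputable def polyDu : Polynomial ℝ := X^4 + X^2

lemma degP (ℓ : ℝ) : (polyP ℓ).degree < 8 := by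
  have : (polyP ℓ).degree ≤ 6 := by unfold polyP; compute_degree
  exact lt_of_le_of_lt this (by norm_num)

lemma degQ (ℓ : ℝ) : (polyQ ℓ).degree < 6 := by
  have : (polyQ ℓ).degree ≤ 4 := by unfold polyQ; compute_degree
  exact lt_of_le_of_lt this (by norm_num)

lemma degCX8 {a : ℝ} (ha : a ≠ 0) : (C a * X^8 : Polynomial ℝ).degree = 8 :=
  degree_C_mul_X_pow 8 ha

lemma degN (ℓ : ℝ) (hℓ : 0 < ℓ) : (polyN ℓ).degree = 8 := by
  rw [polyN, degree_add_eq_left_of_degree_lt, degCX8 (by positivity)]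
  rw [degCX8 (by positivity : (ℓ^4/12 : ℝ) ≠ 0)]; exact degP ℓ

lemma leadN (ℓ : ℝ) (hℓ : 0 < ℓ) : (polyN ℓ).leadingCoeff = ℓ^4/12 := by
  rw [polyN, leadingCoeff_add_of_degree_lt', leadingCoeff_C_mul_X_pow]
  rw [degCX8 (by positivity : (ℓ^4/12 : ℝ) ≠ 0)]; exact degP ℓ

lemma degQX2 (ℓ : ℝ) : (polyQ ℓ * X^2).degree < 8 := by
  calc (polyQ ℓ * X^2).degree ≤ (polyQ ℓ).degree + 2 := by
        simpa using degree_mul_le (polyQ ℓ) (X^2)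
    _ < 6 + 2 := by
        exact (WithBot.add_lt_add_iff_right (by norm_num : (2 : WithBot ℕ) ≠ ⊥)).2 (degQ ℓ)
    _ = 8 := by norm_num

lemma degD (ℓ : ℝ) (hℓ : 0 < ℓ) : (polyD ℓ).degree = 8 := by
  rw [polyD, degree_add_eq_left_of_degree_lt, degCX8 hℓ.ne']
  rw [degCX8 hℓ.ne']; exact degQX2 ℓ

lemma leadD (ℓ : ℝ) (hℓ : 0 < ℓ) : (polyD ℓ).leadingCoeff = ℓ := by
  rw [polyD, leadingCoeff_add_of_degree_lt', leadingCoeff_C_mul_X_pow]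
  rw [degCX8 hℓ.ne']; exact degQX2 ℓ

lemma degNu (ℓ : ℝ) (hℓ : 0 < ℓ) : (polyNu ℓ).degree = 4 := by
  rw [polyNu, degree_add_eq_left_of_degree_lt]
  · exact_mod_cast degree_C_mul_X_pow 4 (by positivity : (ℓ^3/12:ℝ) ≠ 0)
  rw [degree_C_mul_X_pow 4 (by positivity : (ℓ^3/12:ℝ) ≠ 0)]
  have : (C (3*ℓ^5/40) * X^2 + C (ℓ^7/448) : Polynomial ℝ).degree ≤ 2 := by compute_degree
  exact lt_of_le_of_lt this (by norm_num)

lemma leadNu (ℓ : ℝ) (hℓ : 0 < ℓ) : (polyNu ℓ).leadingCoeff = ℓ^3/12 := by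
  rw [polyNu, leadingCoeff_add_of_degree_lt', leadingCoeff_C_mul_X_pow]
  rw [degree_C_mul_X_pow 4 (by positivity : (ℓ^3/12:ℝ) ≠ 0)]
  have : (C (3*ℓ^5/40) * X^2 + C (ℓ^7/448) : Polynomial ℝ).degree ≤ 2 := by compute_degree
  exact lt_of_le_of_lt this (by norm_num)

lemma degDu : (polyDu).degree = 4 := by
  rw [polyDu, degree_add_eq_left_of_degree_lt]
  · exact_mod_cast degree_X_pow 4
  rw [degree_X_pow, degree_X_pow]
  exact_mod_cast (by norm_num : (2:ℕ) < 4)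

lemma leadDu : (polyDu).leadingCoeff = 1 := by
  rw [polyDu, leadingCoeff_add_of_degree_lt', leadingCoeff_X_pow]
  rw [degree_X_pow, degree_X_pow]
  exact_mod_cast (by norm_num : (2:ℕ) < 4)

lemma tendstoND (ℓ : ℝ) (hℓ : 0 < ℓ) :
    Tendsto (fun x => (polyN ℓ).eval x / (polyD ℓ).eval x) atTop (nhds (ℓ^3/12)) := by
  have h := Polynomial.div_tendsto_leadingCoeff_div_of_degree_eq (P := polyN ℓ) (Q := polyD ℓ)
    (by rw [degN ℓ hℓ, degD ℓ hℓ])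
  rw [leadN ℓ hℓ, leadD ℓ hℓ] at h
  convert h using 2
  field_simp

lemma tendstoNuDu (ℓ : ℝ) (hℓ : 0 < ℓ) :
    Tendsto (fun x => (polyNu ℓ).eval x / (polyDu).eval x) atTop (nhds (ℓ^3/12)) := by
  have h := Polynomial.div_tendsto_leadingCoeff_div_of_degree_eq (P := polyNu ℓ) (Q := polyDu)
    (by rw [degNu ℓ hℓ, degDu])
  rw [leadNu ℓ hℓ, leadDu] at h
  simpa using h

lemma tendsto_atBot_of_even {f : ℝ → ℝ} {L : ℝ} (h : Tendsto f atTop (nhds L))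
    (he : ∀ x, f (-x) = f x) : Tendsto f atBot (nhds L) := by
  have h2 := h.comp tendsto_neg_atBot_atTop
  refine h2.congr fun x => ?_
  simp [Function.comp, he]

lemma evenND (ℓ x : ℝ) : (polyN ℓ).eval (-x) / (polyD ℓ).eval (-x)
    = (polyN ℓ).eval x / (polyD ℓ).eval x := by
  have h1 : (polyN ℓ).eval (-x) = (polyN ℓ).eval x := by
    simp only [polyN, polyP, eval_add, eval_mul, eval_pow, eval_C, eval_X]; ring
  have h2 : (polyD ℓ).eval (-x) = (polyD ℓ).eval x := by
    simp only [polyD, polyQ, eval_add, eval_mul, eval_pow, eval_C, eval_X]; ring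
  rw [h1, h2]

lemma evenNuDu (ℓ x : ℝ) : (polyNu ℓ).eval (-x) / (polyDu).eval (-x)
    = (polyNu ℓ).eval x / (polyDu).eval x := by
  have h1 : (polyNu ℓ).eval (-x) = (polyNu ℓ).eval x := by
    simp only [polyNu, eval_add, eval_mul, eval_pow, eval_C, eval_X]; ring
  have h2 : (polyDu).eval (-x) = (polyDu).eval x := by
    simp only [polyDu, eval_add, eval_pow, eval_X]; ring
  rw [h1, h2]

lemma keybound (ℓ : ℝ) (hℓ : 0 < ℓ) (x : ℝ) (hx : x ≠ 0) :
    (polyN ℓ).eval x / (polyD ℓ).eval x ≤ minEig (intV0 ℓ x) / x^2 ∧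
    minEig (intV0 ℓ x) / x^2 ≤ (polyNu ℓ).eval x / polyDu.eval x := by
  have hA := intA ℓ x
  have hB := intB ℓ x
  have hC := intC ℓ x
  set A := (∫ y in (x - ℓ / 2)..(x + ℓ / 2), y ^ 4 : ℝ) with hAdef
  set B := (∫ y in (x - ℓ / 2)..(x + ℓ / 2), y ^ 5 : ℝ) with hBdef
  set C' := (∫ y in (x - ℓ / 2)..(x + ℓ / 2), y ^ 6 : ℝ) with hCdef
  have hx2 : (0:ℝ) < x^2 := by positivity
  have htr : (0:ℝ) < A + C' := by
    rw [hA, hC]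
    have e5 : (0:ℝ) < ℓ^5/80 := by positivity
    have t1 : (0:ℝ) ≤ ℓ*x^4 := by positivity
    have t2 : (0:ℝ) ≤ (ℓ^3/2)*x^2 := by positivity
    have t3 : (0:ℝ) ≤ ℓ*x^6 := by positivity
    have t4 : (0:ℝ) ≤ (5*ℓ^3/4)*x^4 := by positivity
    have t5 : (0:ℝ) ≤ (3*ℓ^5/16)*x^2 := by positivity
    have t6 : (0:ℝ) ≤ ℓ^7/448 := by positivity
    linarith
  have hme : minEig (intV0 ℓ x) = minEig !![(A:ℂ), B; B, C'] := rfl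
  have hNx : (polyN ℓ).eval x = A*C' - B^2 := by
    rw [hA, hB, hC]
    simp only [polyN, polyP, eval_add, eval_mul, eval_pow, eval_C, eval_X]
    ring
  have hDx : (polyD ℓ).eval x = (A+C')*x^2 := by
    rw [hA, hC]
    simp only [polyD, polyQ, eval_add, eval_mul, eval_pow, eval_C, eval_X]
    ring
  have hNux : (polyNu ℓ).eval x = A*x^2 - 2*B*x + C' := by
    rw [hA, hB, hC]
    simp only [polyNu, eval_add, eval_mul, eval_pow, eval_C, eval_X]
    ring
  have hDux : polyDu.eval x = (1+x^2)*x^2 := by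
    simp only [polyDu, eval_add, eval_pow, eval_X]; ring
  constructor
  · rw [hme, hNx, hDx, ← div_div]
    exact div_le_div_of_nonneg_right (minEig_lower A B C' htr) hx2.le |>.trans_eq rfl
  · rw [hme, hNux, hDux, ← div_div]
    exact div_le_div_of_nonneg_right (minEig_upper A B C' x hx htr) hx2.le |>.trans_eq rfl

end PolyAux

/-- For `V₀(x) = [[x⁴, x⁵], [x⁵, x⁶]]` and `ℓ > 0`:
`det(∫_{x−ℓ/2}^{x+ℓ/2} V₀) = ℓ⁴x⁸/12 + (lower degree terms in x)`,
`tr(∫_{x−ℓ/2}^{x+ℓ/2} V₀) = ℓx⁶ + (lower degree terms in x)`, and consequently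
`liminf_{x→±∞} λ(∫_{x−ℓ/2}^{x+ℓ/2} V₀)/x² ≥ ℓ³/12`. -/
theorem stmt_4 (ℓ : ℝ) (hℓ : 0 < ℓ) :
    (∃ p : Polynomial ℝ, p.degree < 8 ∧
      ∀ x : ℝ, (intV0 ℓ x).det.re = ℓ ^ 4 * x ^ 8 / 12 + p.eval x) ∧
    (∃ q : Polynomial ℝ, q.degree < 6 ∧
      ∀ x : ℝ, (intV0 ℓ x).trace.re = ℓ * x ^ 6 + q.eval x) ∧
    ℓ ^ 3 / 12 ≤ Filter.liminf (fun x : ℝ => minEig (intV0 ℓ x) / x ^ 2) Filter.atTop ∧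
    ℓ ^ 3 / 12 ≤ Filter.liminf (fun x : ℝ => minEig (intV0 ℓ x) / x ^ 2) Filter.atBot := by
  have hN := tendstoND ℓ hℓ
  have hU := tendstoNuDu ℓ hℓ
  have hNb := tendsto_atBot_of_even hN (fun x => evenND ℓ x)
  have hUb := tendsto_atBot_of_even hU (fun x => evenNuDu ℓ x)
  refine ⟨⟨polyP ℓ, degP ℓ, ?_⟩, ⟨polyQ ℓ, degQ ℓ, ?_⟩, ?_, ?_⟩
  · intro x
    rw [intV0_det_re, intA, intB, intC]
    simp only [polyP, eval_add, eval_mul, eval_pow, eval_C, eval_X]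
    ring
  · intro x
    rw [intV0_trace_re, intA, intC]
    simp only [polyQ, eval_add, eval_mul, eval_pow, eval_C, eval_X]
    ring
  · have h1 : ∀ᶠ x in atTop, (polyN ℓ).eval x / (polyD ℓ).eval x
        ≤ minEig (intV0 ℓ x) / x ^ 2 :=
      (eventually_ne_atTop 0).mono fun x hx => (keybound ℓ hℓ x hx).1
    have h2 : ∀ᶠ x in atTop, minEig (intV0 ℓ x) / x ^ 2 ≤ ℓ^3/12 + 1 := by
      filter_upwards [eventually_ne_atTop 0,
        hU.eventually_le_const (by linarith : ℓ^3/12 < ℓ^3/12 + 1)] with x hx hle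
      exact le_trans (keybound ℓ hℓ x hx).2 hle
    calc ℓ ^ 3 / 12 = liminf (fun x => (polyN ℓ).eval x / (polyD ℓ).eval x) atTop :=
          (hN.liminf_eq).symm
      _ ≤ _ := Filter.liminf_le_liminf h1 hN.isBoundedUnder_ge
          (Filter.isCoboundedUnder_ge_of_eventually_le atTop h2)
  · have h1 : ∀ᶠ x in atBot, (polyN ℓ).eval x / (polyD ℓ).eval x
        ≤ minEig (intV0 ℓ x) / x ^ 2 :=
      (eventually_ne_atBot 0).mono fun x hx => (keybound ℓ hℓ x hx).1
    have h2 : ∀ᶠ x in atBot, minEig (intV0 ℓ x) / x ^ 2 ≤ ℓ^3/12 + 1 := by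
      filter_upwards [eventually_ne_atBot 0,
        hUb.eventually_le_const (by linarith : ℓ^3/12 < ℓ^3/12 + 1)] with x hx hle
      exact le_trans (keybound ℓ hℓ x hx).2 hle
    calc ℓ ^ 3 / 12 = liminf (fun x => (polyN ℓ).eval x / (polyD ℓ).eval x) atBot :=
          (hNb.liminf_eq).symm
      _ ≤ _ := Filter.liminf_le_liminf h1 hNb.isBoundedUnder_ge
          (Filter.isCoboundedUnder_ge_of_eventually_le atBot h2)
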